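/- For a primary Gaussian prime π = a + bi, the quartic residue symbol satisfies (i/π)₄ = i^((−a+1)/2). -/

import Mathlib

open Zsqrtd

local notation "ℤ[i]" => GaussianInt

/-- The imaginary unit `i` in `ℤ[i]`. -/
def gi : ℤ[i] := Zsqrtd.sqrtd

/-- `α` is primary if `α ≡ 1 (mod 2(1+i))`. -/
def IsPrimary (α : ℤ[i]) : Prop := 2 * (1 + gi) ∣ α - 1
open scoped Classical in
/-- The quartic residue symbol `(α/π)₄`: the unique power of `i` congruent to
`α ^ ((Nπ - 1)/4)` modulo `π`, where `Nπ` is the cardinality of `ℤ[i]/(π)`. -/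
noncomputable def quartic (α π : ℤ[i]) : ℤ[i] :=
  if h : ∃ k : Fin 4,
      π ∣ α ^ ((Nat.card (ℤ[i] ⧸ Ideal.span {π}) - 1) / 4) - gi ^ (k : ℕ)
  then gi ^ ((h.choose : Fin 4) : ℕ) else 0

/-- `i` as a unit of `ℤ[i]`. -/
def giUnit : (GaussianInt)ˣ := ⟨gi, -gi, by decide, by decide⟩

noncomputable def giBasis : Module.Basis (Fin 2) ℤ ℤ[i] :=
  Module.Basis.ofEquivFun
  { toFun := fun z => ![z.re, z.im]
    invFun := fun f => ⟨f 0, f 1⟩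
    left_inv := fun z => by simp
    right_inv := fun f => by ext i; fin_cases i <;> simp
    map_add' := fun x y => by ext i; fin_cases i <;> simp
    map_smul' := fun n x => by
      ext i; fin_cases i <;> simp [Zsqrtd.re_smul, Zsqrtd.im_smul] }

instance : Module.Free ℤ ℤ[i] := Module.Free.of_basis giBasis
instance : Module.Finite ℤ ℤ[i] := Module.Finite.of_basis giBasis

theorem algebraNorm_eq (x : ℤ[i]) : Algebra.norm ℤ x = x.norm := by
  rw [Algebra.norm_eq_matrix_det giBasis, Matrix.det_fin_two]
  simp [Algebra.leftMulMatrix_eq_repr_mul, giBasis, Zsqrtd.norm_def, Zsqrtd.re_mul, Zsqrtd.im_mul]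

theorem card_quot (π : ℤ[i]) : Nat.card (ℤ[i] ⧸ Ideal.span {π}) = π.norm.natAbs := by
  rw [← Submodule.cardQuot_apply, ← Ideal.absNorm_apply, Ideal.absNorm_span_singleton,
    algebraNorm_eq]

lemma gi_pow_four : gi ^ 4 = 1 := by decide
lemma gi_pow_mod (n : ℕ) : gi ^ n = gi ^ (n % 4) := by
  conv_lhs => rw [← Nat.div_add_mod n 4]
  rw [pow_add, pow_mul, gi_pow_four, one_pow, one_mul]

lemma giUnit_pow_four : giUnit ^ (4:ℕ) = 1 := by ext <;> decide

lemma norm_dvd_of_dvd {π x : ℤ[i]} (h : π ∣ x) : π.norm ∣ x.norm := by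
  obtain ⟨z, hz⟩ := h
  exact ⟨z.norm, by rw [hz, Zsqrtd.norm_mul]⟩

lemma distinct (π : ℤ[i]) (hπ : Prime π) (hodd : Odd π.norm) (s t : Fin 4)
    (h : π ∣ gi ^ (s:ℕ) - gi ^ (t:ℕ)) : s = t := by
  have h4 : ¬ (π.norm ∣ 4) := by
    intro hd
    have h2 : π.norm.natAbs ∣ 4 := by
      have := Int.natAbs_dvd_natAbs.mpr hd; simpa using this
    have h3 : π.norm.natAbs % 2 = 1 := Nat.odd_iff.mp (Int.natAbs_odd.mpr hodd)
    have h5 : π.norm.natAbs ≤ 4 := Nat.le_of_dvd (by norm_num) h2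
    have h1 : π.norm.natAbs = 1 := by
      generalize hk : π.norm.natAbs = k at *
      interval_cases k <;> omega
    exact hπ.not_unit (Zsqrtd.norm_eq_one_iff.mp h1)
  fin_cases s <;> fin_cases t <;>
    first
      | rfl
      | exact absurd (dvd_trans (norm_dvd_of_dvd h) (by decide)) h4

lemma arith (u v : ℤ) : 4 ∣ (u-v)*(u-v) + 2*(u-v) + (u+v)*(u+v) := by
  rcases Int.even_or_odd u with ⟨p,hp⟩|⟨p,hp⟩ <;>
    rcases Int.even_or_odd v with ⟨q,hq⟩|⟨q,hq⟩ <;> subst hp hq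
  · exact ⟨(p-q)*(p-q)+(p-q)+(p+q)*(p+q), by ring⟩
  · exact ⟨(p-q)*(p-q)+(p+q)*(p+q)+(p+q), by ring⟩
  · exact ⟨(p-q+1)*(p-q+1)+(p+q)*(p+q)+(p+q), by ring⟩
  · exact ⟨(p-q)*(p-q)+(p-q)+(p+q+1)*(p+q+1), by ring⟩

/-- For a primary Gaussian prime `π = a + bi`, one has `(i/π)₄ = i^((-a+1)/2)`. -/
theorem quartic_i (π : ℤ[i]) (hπ : Prime π) (hp : IsPrimary π) :
    quartic gi π = ((giUnit ^ ((-π.re + 1) / 2) : (GaussianInt)ˣ) : ℤ[i]) := by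
  obtain ⟨z, hz⟩ := hp
  have ha : π.re - 1 = 2*z.re - 2*z.im := by
    have h := congrArg Zsqrtd.re hz
    simp [gi, Zsqrtd.re_mul, Zsqrtd.im_mul, Zsqrtd.re_add, Zsqrtd.im_add] at h
    omega
  have hb : π.im = 2*z.re + 2*z.im := by
    have h := congrArg Zsqrtd.im hz
    simp [gi, Zsqrtd.re_mul, Zsqrtd.im_mul, Zsqrtd.re_add, Zsqrtd.im_add] at h
    omega
  set u := z.re with hu
  set v := z.im with hv
  set K : ℤ := (u-v)*(u-v)+(u-v)+(u+v)*(u+v) with hKdef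
  have hK : π.norm = 4*K + 1 := by
    rw [Zsqrtd.norm_def]
    have ha' : π.re - 1 - (2*u - 2*v) = 0 := by omega
    have hb' : π.im - (2*u + 2*v) = 0 := by omega
    linear_combination (π.re + 2*u - 2*v + 1) * ha' + (π.im + 2*u + 2*v) * hb'
  have hodd : Odd π.norm := ⟨2*K, by omega⟩
  have hK0 : 0 ≤ K := by
    have h1 : 4*K ≥ -1 := by nlinarith [sq_nonneg (2*(u-v)+1), sq_nonneg (u+v)]
    omega
  set n := Nat.card (ℤ[i] ⧸ Ideal.span {π}) with hn
  have hnZ : (n:ℤ) = 4*K + 1 := by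
    rw [hn, card_quot, Int.natAbs_of_nonneg (Zsqrtd.norm_nonneg (by norm_num) π), hK]
  set K' := K.toNat with hK'
  have hKK : (K':ℤ) = K := Int.toNat_of_nonneg hK0
  have hnn : n = 4*K' + 1 := by
    have : (n:ℤ) = ((4*K'+1 : ℕ) : ℤ) := by push_cast; omega
    exact_mod_cast this
  have hM : (n - 1)/4 = K' := by omega
  have hex : ∃ k : Fin 4, π ∣ gi ^ ((n-1)/4) - gi ^ (k:ℕ) :=
    ⟨⟨((n-1)/4) % 4, Nat.mod_lt _ (by norm_num)⟩, by
      rw [gi_pow_mod ((n-1)/4)]; simp⟩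
  rw [quartic, dif_pos hex]
  have hspec := hex.choose_spec
  have hch : (⟨((n-1)/4) % 4, Nat.mod_lt _ (by norm_num)⟩ : Fin 4) = hex.choose := by
    refine distinct π hπ hodd _ _ ?_
    show π ∣ gi ^ (((n-1)/4) % 4) - gi ^ ((hex.choose : Fin 4) : ℕ)
    rw [← gi_pow_mod]
    exact hspec
  rw [← hch]
  show gi ^ (((n-1)/4) % 4) = _
  -- RHS handling
  have hj : (-π.re + 1) / 2 = v - u := by
    have : -π.re + 1 = 2*(v - u) := by omega
    rw [this, Int.mul_ediv_cancel_left _ (by norm_num)]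
  have hdiv : (4:ℤ) ∣ (K':ℤ) - (v - u) := by
    obtain ⟨w, hw⟩ := arith u v
    exact ⟨w, by rw [hKK]; rw [hKdef]; linarith⟩
  have h41 : giUnit ^ (4:ℤ) = 1 := by
    rw [show (4:ℤ) = ((4:ℕ):ℤ) from rfl, zpow_natCast, giUnit_pow_four]
  have hzp : giUnit ^ ((-π.re + 1) / 2) = giUnit ^ ((K':ℤ)) := by
    obtain ⟨t, ht⟩ := hdiv
    rw [hj, show (K':ℤ) = (v - u) + 4*t by omega, zpow_add, zpow_mul, h41, one_zpow, mul_one]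
  rw [hzp, zpow_natCast, hM]
  rw [show ((giUnit ^ K' : (GaussianInt)ˣ) : ℤ[i]) = gi ^ K' from Units.val_pow_eq_pow_val _ _]
  exact (gi_pow_mod K').symm
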